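/- For every integer 0 ≤ r ≤ n, it holds that C(n,r)·(q̂_mg−1)^r ≤ s_r ≤ C(n,r)·(q̂_a−1)^r, where C(n,r) is the binomial coefficient, q̂_a = (1/n)∑_{i=1}^n q_i, and q̂_mg − 1 = (∏_{i=1}^n (q_i−1))^{1/n} is the geometric mean of the numbers q_i − 1. -/

import Mathlib

/-- The Hamming weight of `x ∈ Q = ∏ i, ℤ/q_iℤ`: the number of coordinates `i`
with `x i ≠ 0`. -/
def mwt {n : ℕ} {q : Fin n → ℕ} (x : ∀ i, ZMod (q i)) : ℕ :=
  (Finset.univ.filter (fun i => x i ≠ 0)).card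

/-- `sph q r` is `s_r`, the number of `x ∈ Q` with `wt(x) = r`. -/
noncomputable def sph {n : ℕ} (q : Fin n → ℕ) (r : ℕ) : ℕ :=
  Nat.card {x : ∀ i, ZMod (q i) // mwt x = r}

/-- `sphI q r I` is `s_r(I)`, the number of `x ∈ Q` with `wt(x) = r` and
`supp(x) ⊆ I`. -/
noncomputable def sphI {n : ℕ} (q : Fin n → ℕ) (r : ℕ) (I : Finset (Fin n)) : ℕ :=
  Nat.card {x : ∀ i, ZMod (q i) // mwt x = r ∧ ∀ i, x i ≠ 0 → i ∈ I}

open Finset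

section Counting

lemma card_nonzero_aux (m : ℕ) [NeZero m] :
    Fintype.card {a : ZMod m // a ≠ 0} = m - 1 := by
  have : Fintype.card {a : ZMod m // a = 0} = 1 := Fintype.card_subtype_eq (0 : ZMod m)
  have h := Fintype.card_subtype_compl (fun a : ZMod m => a = 0)
  simpa [this, ZMod.card] using h

lemma fiber_card_aux {n : ℕ} (q : Fin n → ℕ) [∀ i, NeZero (q i)] (I : Finset (Fin n)) :
    Nat.card {x : ∀ i, ZMod (q i) // ∀ i, x i ≠ 0 ↔ i ∈ I} = ∏ i ∈ I, (q i - 1) := by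
  classical
  have e : {x : ∀ i, ZMod (q i) // ∀ i, x i ≠ 0 ↔ i ∈ I} ≃ ∀ i : I, {a : ZMod (q i) // a ≠ 0} :=
    { toFun := fun x i => ⟨x.1 i, (x.2 i).mpr i.2⟩
      invFun := fun f => ⟨fun i => if h : i ∈ I then (f ⟨i, h⟩).1 else 0, by
        intro i
        constructor
        · intro hne
          by_contra h
          simp [h] at hne
        · intro h
          simpa [h] using (f ⟨i, h⟩).2⟩
      left_inv := by
        intro x
        ext i
        by_cases h : i ∈ I
        · simp [h]
        · simp [h]
          exact ((x.2 i).not_right.mpr h).symm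
      right_inv := by
        intro f
        funext i
        apply Subtype.ext
        simp }
  rw [Nat.card_congr e]
  simp [Nat.card_eq_fintype_card, Fintype.card_pi, card_nonzero_aux]
  exact Finset.prod_attach I (fun i => q i - 1)

lemma sph_eq_sum {n : ℕ} (q : Fin n → ℕ) [∀ i, NeZero (q i)] (r : ℕ) :
    sph q r = ∑ I ∈ Finset.univ.powersetCard r, ∏ i ∈ I, (q i - 1) := by
  classical
  rw [sph, Nat.card_eq_fintype_card, Fintype.card_subtype]
  rw [Finset.card_eq_sum_card_fiberwise
    (f := fun x : ∀ i, ZMod (q i) => Finset.univ.filter (fun i => x i ≠ 0))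
    (t := Finset.univ.powersetCard r)
    (by intro x hx
        simp only [Finset.mem_coe, Finset.mem_filter, Finset.mem_univ, true_and] at hx
        rw [Finset.mem_coe, Finset.mem_powersetCard]
        exact ⟨Finset.subset_univ _, hx⟩)]
  refine Finset.sum_congr rfl fun I hI => ?_
  rw [Finset.mem_powersetCard] at hI
  rw [← fiber_card_aux q I, Nat.card_eq_fintype_card, Fintype.card_subtype]
  congr 1
  rw [Finset.filter_filter]
  apply Finset.filter_congr
  intro x _
  constructor
  · rintro ⟨-, h2⟩ i
    rw [← h2]; simp
  · intro h
    have heq : Finset.univ.filter (fun i => x i ≠ 0) = I := by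
      ext i; simpa using h i
    exact ⟨by rw [mwt, heq, hI.2], heq⟩

end Counting

section Inequalities

/-- AM-GM: `x^r * y ≤ ((r*x + y)/(r+1))^(r+1)` for nonnegative reals. -/
lemma amgm_core_aux (x y : ℝ) (hx : 0 ≤ x) (hy : 0 ≤ y) (r : ℕ) :
    x ^ r * y ≤ (((r : ℝ) * x + y) / (r + 1)) ^ (r + 1) := by
  have hr1 : (0:ℝ) < (r:ℝ) + 1 := by positivity
  have hw1 : (0:ℝ) ≤ (r:ℝ) / (r+1) := by positivity
  have hw2 : (0:ℝ) ≤ 1 / ((r:ℝ)+1) := by positivity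
  have hsum : (r:ℝ) / (r+1) + 1 / ((r:ℝ)+1) = 1 := by field_simp
  have h := Real.geom_mean_le_arith_mean2_weighted hw1 hw2 hx hy hsum
  have hc : (r:ℝ)/(r+1) * x + 1/((r:ℝ)+1) * y = ((r : ℝ) * x + y) / (r + 1) := by ring
  rw [hc] at h
  have hL : 0 ≤ x ^ ((r:ℝ)/(r+1)) * y ^ (1/((r:ℝ)+1) : ℝ) := by positivity
  have h2 := pow_le_pow_left₀ hL h (r+1)
  calc x ^ r * y = (x ^ ((r:ℝ)/(r+1)) * y ^ (1/((r:ℝ)+1) : ℝ)) ^ (r+1) := by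
        rw [mul_pow, ← Real.rpow_natCast (x ^ ((r:ℝ)/(r+1))) (r+1),
          ← Real.rpow_natCast (y ^ (1/((r:ℝ)+1) : ℝ)) (r+1),
          ← Real.rpow_mul hx, ← Real.rpow_mul hy]
        push_cast
        rw [div_mul_cancel₀, one_div, inv_mul_cancel₀ hr1.ne', Real.rpow_one,
          Real.rpow_natCast]
        exact hr1.ne'
    _ ≤ _ := h2

lemma choose_step_aux (k r : ℕ) (a S : ℝ) (ha : 0 ≤ a) (hS : 0 ≤ S) :
    (k.choose (r+1) : ℝ) * (S/k)^(r+1) + a * (k.choose r) * (S/k)^r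
      ≤ ((k+1).choose (r+1) : ℝ) * ((S + a)/(k+1))^(r+1) := by
  rcases Nat.eq_zero_or_pos k with hk | hk
  · subst hk
    rcases Nat.eq_zero_or_pos r with hr | hr
    · subst hr; simp; nlinarith
    · rw [Nat.choose_eq_zero_of_lt (by omega), Nat.choose_eq_zero_of_lt (by omega)]
      simp only [Nat.cast_zero, zero_mul, mul_zero, zero_add, add_zero]
      positivity
  · rcases le_or_gt r k with hrk | hrk
    · -- main case
      set m : ℝ := S / k with hm
      have hkR : (0:ℝ) < (k:ℝ) := by exact_mod_cast hk
      have hm0 : 0 ≤ m := by positivity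
      have hid2 : ((k:ℝ)+1) * (k.choose r) = ((r:ℝ)+1) * (((k+1).choose (r+1) : ℕ) : ℝ) := by
        have h := congrArg (Nat.cast : ℕ → ℝ) (Nat.add_one_mul_choose_eq k r)
        push_cast at h
        linarith
      have hsucc : (((k+1).choose (r+1) : ℕ) : ℝ) = (k.choose r : ℝ) + (k.choose (r+1) : ℝ) := by
        exact_mod_cast congrArg (Nat.cast : ℕ → ℝ) (Nat.choose_succ_succ k r)
      have hid1 : ((k:ℝ)+1) * (k.choose (r+1)) = ((k:ℝ) - r) * (((k+1).choose (r+1) : ℕ) : ℝ) := by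
        have : ((k:ℝ) - r) * (((k+1).choose (r+1) : ℕ) : ℝ)
            = ((k:ℝ)+1) * (((k+1).choose (r+1) : ℕ) : ℝ)
              - ((r:ℝ)+1) * (((k+1).choose (r+1) : ℕ) : ℝ) := by ring
        rw [this, ← hid2, hsucc]; ring
      set b : ℝ := (((k:ℝ) - r) * m + ((r:ℝ)+1) * a) / ((k:ℝ)+1) with hb
      have hb0 : 0 ≤ b := by
        apply div_nonneg _ (by positivity)
        have : (0:ℝ) ≤ (k:ℝ) - r := by
          have : (r:ℝ) ≤ k := by exact_mod_cast hrk
          linarith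
        positivity
      have key : (k.choose (r+1) : ℝ) * m^(r+1) + a * (k.choose r) * m^r
          = (((k+1).choose (r+1) : ℕ) : ℝ) * (m^r * b) := by
        rw [hb]
        field_simp
        linear_combination (m^(r+1)) * hid1 + (a * m^r) * hid2
      rw [key]
      have hc : ((r:ℝ) * m + b) / ((r:ℝ) + 1) = (S + a) / ((k:ℝ)+1) := by
        rw [hb, hm]
        field_simp
        ring
      have := amgm_core_aux m b hm0 hb0 r
      rw [hc] at this
      have hC0 : (0:ℝ) ≤ (((k+1).choose (r+1) : ℕ) : ℝ) := by positivity
      push_cast at *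
      calc ((k+1).choose (r+1) : ℝ) * (m^r * b)
            ≤ ((k+1).choose (r+1) : ℝ) * ((S + a)/((k:ℝ)+1))^(r+1) :=
            mul_le_mul_of_nonneg_left this hC0
        _ = _ := by norm_cast
    · rw [Nat.choose_eq_zero_of_lt (by omega), Nat.choose_eq_zero_of_lt hrk]
      simp only [Nat.cast_zero, zero_mul, mul_zero, add_zero, zero_add]
      positivity

/-- Maclaurin-type upper bound for elementary symmetric means. -/
lemma esymm_upper_aux {ι : Type*} [DecidableEq ι] (s : Finset ι) (a : ι → ℝ)
    (ha : ∀ i, 0 ≤ a i) :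
    ∀ r, ∑ I ∈ s.powersetCard r, ∏ i ∈ I, a i
      ≤ (s.card.choose r : ℝ) * ((∑ i ∈ s, a i) / s.card) ^ r := by
  induction s using Finset.induction_on with
  | empty =>
    intro r
    rcases r with _ | r
    · simp
    · have : (∅ : Finset ι).powersetCard (r+1) = ∅ := by
        rw [Finset.powersetCard_eq_empty]
        simp
      simp [this, Nat.choose_eq_zero_of_lt (Nat.succ_pos r)]
  | @insert j t hj ih =>
    intro r
    rcases r with _ | r
    · simp
    · rw [Finset.powersetCard_succ_insert hj]
      have hdisj : Disjoint (t.powersetCard (r+1)) ((t.powersetCard r).image (insert j)) := by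
        rw [Finset.disjoint_left]
        intro I hI hI2
        have h1 : j ∉ I := fun hji => hj ((Finset.mem_powersetCard.mp hI).1 hji)
        obtain ⟨I', _, rfl⟩ := Finset.mem_image.mp hI2
        exact h1 (Finset.mem_insert_self j I')
      rw [Finset.sum_union hdisj]
      have hinj : ∀ I1 ∈ t.powersetCard r, ∀ I2 ∈ t.powersetCard r,
          insert j I1 = insert j I2 → I1 = I2 := by
        intro I1 h1 I2 h2 h
        have hj1 : j ∉ I1 := fun hji => hj ((Finset.mem_powersetCard.mp h1).1 hji)
        have hj2 : j ∉ I2 := fun hji => hj ((Finset.mem_powersetCard.mp h2).1 hji)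
        rw [← Finset.erase_insert hj1, ← Finset.erase_insert hj2, h]
      rw [Finset.sum_image hinj]
      have himg : ∑ I ∈ t.powersetCard r, ∏ i ∈ insert j I, a i
          = a j * ∑ I ∈ t.powersetCard r, ∏ i ∈ I, a i := by
        rw [Finset.mul_sum]
        refine Finset.sum_congr rfl fun I hI => ?_
        exact Finset.prod_insert (fun hji => hj ((Finset.mem_powersetCard.mp hI).1 hji))
      rw [himg, Finset.card_insert_of_notMem hj, Finset.sum_insert hj]
      have hS : 0 ≤ ∑ i ∈ t, a i := Finset.sum_nonneg fun i _ => ha i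
      have h1 := ih (r+1)
      have h2 := mul_le_mul_of_nonneg_left (ih r) (ha j)
      have h3 := choose_step_aux t.card r (a j) (∑ i ∈ t, a i) (ha j) hS
      calc (∑ I ∈ t.powersetCard (r+1), ∏ i ∈ I, a i)
            + a j * ∑ I ∈ t.powersetCard r, ∏ i ∈ I, a i
          ≤ (t.card.choose (r+1) : ℝ) * ((∑ i ∈ t, a i) / t.card) ^ (r+1)
            + a j * ((t.card.choose r : ℝ) * ((∑ i ∈ t, a i) / t.card) ^ r) := by
            exact add_le_add h1 h2
        _ = (t.card.choose (r+1) : ℝ) * ((∑ i ∈ t, a i) / t.card) ^ (r+1)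
            + a j * (t.card.choose r : ℝ) * ((∑ i ∈ t, a i) / t.card) ^ r := by ring
        _ ≤ ((t.card+1).choose (r+1) : ℝ)
            * ((∑ i ∈ t, a i + a j) / ((t.card : ℝ)+1)) ^ (r+1) := h3
        _ = _ := by push_cast; rw [add_comm (a j)]

lemma count_mem_powersetCard_aux (n r : ℕ) (i : Fin n) :
    (((univ : Finset (Fin n)).powersetCard (r+1)).filter (fun I => i ∈ I)).card
      = (n-1).choose r := by
  have hcard : ((univ : Finset (Fin n)).erase i).card = n - 1 := by
    rw [Finset.card_erase_of_mem (mem_univ i), Finset.card_univ, Fintype.card_fin]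
  rw [← hcard, ← Finset.card_powersetCard]
  apply Finset.card_bij (fun I _ => I.erase i)
  · intro I hI
    simp only [Finset.mem_filter, Finset.mem_powersetCard] at hI
    rw [Finset.mem_powersetCard]
    constructor
    · intro x hx
      rw [Finset.mem_erase] at hx ⊢
      exact ⟨hx.1, mem_univ x⟩
    · rw [Finset.card_erase_of_mem hI.2, hI.1.2]
      omega
  · intro I1 h1 I2 h2 h
    simp only [Finset.mem_filter] at h1 h2
    rw [← Finset.insert_erase h1.2, ← Finset.insert_erase h2.2, h]
  · intro J hJ
    rw [Finset.mem_powersetCard] at hJ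
    have hiJ : i ∉ J := fun h => (Finset.mem_erase.mp (hJ.1 h)).1 rfl
    refine ⟨insert i J, ?_, ?_⟩
    · simp only [Finset.mem_filter, Finset.mem_powersetCard]
      exact ⟨⟨Finset.subset_univ _, by rw [Finset.card_insert_of_notMem hiJ, hJ.2]⟩,
        Finset.mem_insert_self i J⟩
    · rw [Finset.erase_insert hiJ]

/-- Geometric-mean lower bound for elementary symmetric sums. -/
lemma esymm_lower_aux (n r : ℕ) (hn : 1 ≤ n) (hr : r ≤ n) (a : Fin n → ℝ)
    (ha : ∀ i, 0 < a i) :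
    (n.choose r : ℝ) * ((∏ i, a i) ^ ((n : ℝ)⁻¹)) ^ r
      ≤ ∑ I ∈ (univ : Finset (Fin n)).powersetCard r, ∏ i ∈ I, a i := by
  rcases r with _ | r
  · simp
  set s := (univ : Finset (Fin n)).powersetCard (r+1) with hs
  have hC : 0 < n.choose (r+1) := Nat.choose_pos hr
  have hCR : (0:ℝ) < (n.choose (r+1) : ℝ) := by exact_mod_cast hC
  have hcards : s.card = n.choose (r+1) := by
    rw [hs, Finset.card_powersetCard, Finset.card_univ, Fintype.card_fin]
  have hw : ∑ _I ∈ s, ((n.choose (r+1) : ℝ))⁻¹ = 1 := by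
    rw [Finset.sum_const, hcards, nsmul_eq_mul, mul_inv_cancel₀ hCR.ne']
  have hz : ∀ I ∈ s, (0:ℝ) ≤ ∏ i ∈ I, a i :=
    fun I _ => Finset.prod_nonneg fun i _ => (ha i).le
  have hgm := Real.geom_mean_le_arith_mean_weighted s
    (fun _ => ((n.choose (r+1) : ℝ))⁻¹) (fun I => ∏ i ∈ I, a i)
    (fun _ _ => by positivity) hw hz
  have hprodprod : ∏ I ∈ s, ∏ i ∈ I, a i = ∏ i : Fin n, a i ^ ((n-1).choose r) := by
    have h1 : ∀ I ∈ s, ∏ i ∈ I, a i = ∏ i : Fin n, (if i ∈ I then a i else 1) := by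
      intro I _
      rw [Finset.prod_ite_mem, Finset.univ_inter]
    rw [Finset.prod_congr rfl h1, Finset.prod_comm]
    refine Finset.prod_congr rfl fun i _ => ?_
    rw [← Finset.prod_filter, Finset.prod_const, count_mem_powersetCard_aux]
  have hL : ∏ I ∈ s, (∏ i ∈ I, a i) ^ (((n.choose (r+1) : ℝ))⁻¹)
      = ((∏ i, a i) ^ ((n : ℝ)⁻¹)) ^ (r+1) := by
    rw [Real.finset_prod_rpow s _ hz, hprodprod]
    have hP : (0:ℝ) < ∏ i, a i := Finset.prod_pos fun i _ => ha i
    have h2 : ∏ i : Fin n, a i ^ ((n-1).choose r) = (∏ i, a i) ^ ((n-1).choose r) := by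
      rw [Finset.prod_pow]
    rw [h2, ← Real.rpow_natCast (∏ i, a i) ((n-1).choose r), ← Real.rpow_mul hP.le,
      ← Real.rpow_natCast ((∏ i, a i) ^ ((n : ℝ)⁻¹)) (r+1), ← Real.rpow_mul hP.le]
    congr 1
    have hnc : (n:ℝ) * ((n-1).choose r) = ((r:ℝ)+1) * (n.choose (r+1)) := by
      have h := Nat.add_one_mul_choose_eq (n-1) r
      have hn1 : n - 1 + 1 = n := Nat.succ_pred_eq_of_pos hn
      rw [hn1] at h
      have h2 := congrArg (Nat.cast : ℕ → ℝ) h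
      push_cast at h2
      linarith
    have hnR : (0:ℝ) < (n:ℝ) := by exact_mod_cast hn
    field_simp
    push_cast
    linarith [hnc]
  rw [hL] at hgm
  calc (n.choose (r+1) : ℝ) * ((∏ i, a i) ^ ((n : ℝ)⁻¹)) ^ (r+1)
      ≤ (n.choose (r+1) : ℝ) * ∑ I ∈ s, ((n.choose (r+1) : ℝ))⁻¹ * ∏ i ∈ I, a i :=
        mul_le_mul_of_nonneg_left hgm hCR.le
    _ = ∑ I ∈ s, ∏ i ∈ I, a i := by
        rw [← Finset.mul_sum, ← mul_assoc, mul_inv_cancel₀ hCR.ne', one_mul]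

end Inequalities

/-- For `0 ≤ r ≤ n`, `C(n,r) (q̂_mg - 1)^r ≤ s_r ≤ C(n,r) (q̂_a - 1)^r`, where
`q̂_mg - 1 = (∏ (q_i - 1))^{1/n}` is the geometric mean of the `q_i - 1`, and
`q̂_a - 1 = (1/n) ∑ q_i - 1`. -/
theorem stmt6 (n : ℕ) (hn : 1 ≤ n) (q : Fin n → ℕ) (hq : ∀ i, 2 ≤ q i)
    (r : ℕ) (hr : r ≤ n) :
    (n.choose r : ℝ) * ((∏ i : Fin n, ((q i : ℝ) - 1)) ^ ((n : ℝ)⁻¹)) ^ r ≤ sph q r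
      ∧ (sph q r : ℝ) ≤ (n.choose r : ℝ) * ((∑ i : Fin n, (q i : ℝ)) / n - 1) ^ r := by
  haveI : ∀ i, NeZero (q i) := fun i => ⟨by have := hq i; omega⟩
  have hsph : (sph q r : ℝ)
      = ∑ I ∈ (univ : Finset (Fin n)).powersetCard r, ∏ i ∈ I, ((q i : ℝ) - 1) := by
    rw [sph_eq_sum q r, Nat.cast_sum]
    refine Finset.sum_congr rfl fun I _ => ?_
    rw [Nat.cast_prod]
    refine Finset.prod_congr rfl fun i _ => ?_
    rw [Nat.cast_sub (by have := hq i; omega)]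
    simp
  have hnR : (0:ℝ) < (n:ℝ) := by exact_mod_cast hn
  constructor
  · rw [hsph]
    have hpos : ∀ i, (0:ℝ) < (q i : ℝ) - 1 := by
      intro i
      have h2 : (2:ℝ) ≤ (q i : ℝ) := by exact_mod_cast hq i
      linarith
    exact esymm_lower_aux n r hn hr (fun i => (q i : ℝ) - 1) hpos
  · rw [hsph]
    have hpos : ∀ i, (0:ℝ) ≤ (q i : ℝ) - 1 := by
      intro i
      have h2 : (2:ℝ) ≤ (q i : ℝ) := by exact_mod_cast hq i
      linarith
    have h := esymm_upper_aux (univ : Finset (Fin n)) (fun i => (q i : ℝ) - 1) hpos r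
    rw [Finset.card_univ, Fintype.card_fin] at h
    refine h.trans (le_of_eq ?_)
    congr 1
    rw [Finset.sum_sub_distrib, Finset.sum_const, Finset.card_univ, Fintype.card_fin]
    congr 1
    field_simp
    simp
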